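/- For a non-negative random variable X with survival function p_x, for every N ≥ 2 the quantity Var(m̂) = 2∫_0^∞∫_0^x p_x p_{x'}^{1-1/N} dx' dx − E[X]^2 satisfies Var(m̂) ≤ (2/(1+1/N)) · E[X^{1+1/N}]^{2/(1+1/N)}. Consequently, if E[X^{1+ε}] < ∞ for some ε > 0, then Var(m̂) < ∞ for all N ≥ 1/ε. -/

import Mathlib

open MeasureTheory ProbabilityTheory Set
open scoped ENNReal

/-- For a non-negative random variable `X` with survival function `p x = P(X > x)` and
`N ≥ 2`, the variance `Var(m̂) = 2∫_0^∞∫_0^x p_x p_{x'}^{1-1/N} dx' dx − E[X]²` satisfies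
`Var(m̂) ≤ (2/(1+1/N)) · E[X^{1+1/N}]^{2/(1+1/N)}`. Consequently, if `E[X^{1+ε}] < ∞` for
some `ε > 0`, then `Var(m̂) < ∞` for all `N ≥ 1/ε`. -/
theorem stmt_7 {Ω : Type*} [MeasureSpace Ω] [IsProbabilityMeasure (ℙ : Measure Ω)]
    (X : Ω → ℝ) (hX : Measurable X) (hXpos : ∀ ω, 0 ≤ X ω)
    (p : ℝ → ℝ) (hp : ∀ x, p x = (ℙ {ω | x < X ω}).toReal)
    (N : ℕ) (hN : 2 ≤ N) :
    (2 * (∫⁻ x in Ioi (0:ℝ), ∫⁻ y in Ioo (0:ℝ) x,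
          ENNReal.ofReal (p x * p y ^ (1 - 1/(N:ℝ))))
        - (∫⁻ x in Ioi (0:ℝ), ENNReal.ofReal (p x)) ^ 2
      ≤ ENNReal.ofReal (2/(1 + 1/(N:ℝ)))
          * (∫⁻ ω, (ENNReal.ofReal (X ω)) ^ ((1 + 1/(N:ℝ)) : ℝ) ∂ℙ)
              ^ ((2/(1 + 1/(N:ℝ))) : ℝ)) ∧
    (∀ ε : ℝ, 0 < ε → (∫⁻ ω, (ENNReal.ofReal (X ω)) ^ ((1 + ε) : ℝ) ∂ℙ) ≠ ⊤ →
      1/ε ≤ (N:ℝ) →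
      2 * (∫⁻ x in Ioi (0:ℝ), ∫⁻ y in Ioo (0:ℝ) x,
            ENNReal.ofReal (p x * p y ^ (1 - 1/(N:ℝ))))
          - (∫⁻ x in Ioi (0:ℝ), ENNReal.ofReal (p x)) ^ 2 < ⊤) := by
  have hXae : 0 ≤ᵐ[ℙ] X := Filter.Eventually.of_forall hXpos
  set n : ℝ := (N:ℝ) with hn_def
  have hn2 : (2:ℝ) ≤ n := by rw [hn_def]; exact_mod_cast hN
  have hn0 : (0:ℝ) < n := by linarith
  have hinv : (0:ℝ) < 1/n := by positivity
  have hinv_le : 1/n ≤ 1/2 := by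
    apply one_div_le_one_div_of_le <;> linarith
  set r : ℝ := 1 - 1/n with hr_def
  have hr0 : 0 < r := by rw [hr_def]; linarith
  have hr1 : r < 1 := by rw [hr_def]; linarith
  set q : ℝ := 1 + 1/n with hq_def
  have hq1 : 1 < q := by rw [hq_def]; linarith
  have hq0 : 0 < q := by linarith
  set P : ℝ → ENNReal := fun x => ℙ {ω | x < X ω} with hP_def
  have hPmeas : Measurable P := by
    apply Antitone.measurable
    intro a b hab
    exact measure_mono (fun ω hω => lt_of_le_of_lt hab hω)
  have hpnn : ∀ x, 0 ≤ p x := fun x => by rw [hp]; exact ENNReal.toReal_nonneg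
  have hPof : ∀ x, ENNReal.ofReal (p x) = P x := fun x => by
    rw [hp]; exact ENNReal.ofReal_toReal (measure_ne_top _ _)
  set E : ℝ≥0∞ := ∫⁻ x in Ioi (0:ℝ), ENNReal.ofReal (p x) with hE_def
  have hEP : E = ∫⁻ x in Ioi (0:ℝ), P x := by
    rw [hE_def]; exact lintegral_congr fun x => hPof x
  have hEX : E = ∫⁻ ω, ENNReal.ofReal (X ω) ∂ℙ := by
    rw [hEP, ← lintegral_eq_lintegral_meas_lt ℙ hXae hX.aemeasurable]
  set M : ℝ≥0∞ := ∫⁻ ω, (ENNReal.ofReal (X ω)) ^ q ∂ℙ with hM_def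
  -- Hölder (Jensen): E ≤ M ^ (1/q)
  have hconj : q.HolderConjugate (q/(q-1)) := by
    rw [Real.holderConjugate_iff]; constructor
    · exact hq1
    · rw [inv_div]
      field_simp
      ring
  have hE_le : E ≤ M ^ (1/q) := by
    have h := ENNReal.lintegral_mul_le_Lp_mul_Lq ℙ hconj
      (f := fun ω => ENNReal.ofReal (X ω)) (g := fun _ => 1)
      (hX.ennreal_ofReal.aemeasurable) aemeasurable_const
    simp only [Pi.mul_apply, mul_one, ENNReal.one_rpow, lintegral_one, measure_univ,
      one_mul] at h
    rw [hEX]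
    simpa using h
  -- Hölder for the inner integral
  have hinner : ∀ x : ℝ, (∫⁻ y in Ioo (0:ℝ) x, (P y) ^ r)
      ≤ E ^ r * (ENNReal.ofReal x) ^ (1/n) := by
    intro x
    have hconj2 : (1/r).HolderConjugate n := by
      rw [Real.holderConjugate_iff]; constructor
      · exact (one_lt_one_div hr0 hr1)
      · rw [inv_eq_one_div (1/r), one_div_one_div, hr_def]
        ring
    have h := ENNReal.lintegral_mul_le_Lp_mul_Lq (volume.restrict (Ioo (0:ℝ) x)) hconj2
      (f := fun y => (P y) ^ r) (g := fun _ => 1)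
      ((hPmeas.pow_const r).aemeasurable) aemeasurable_const
    simp only [Pi.mul_apply, mul_one, ENNReal.one_rpow, lintegral_one,
      Measure.restrict_apply MeasurableSet.univ, univ_inter, Real.volume_Ioo,
      one_div_one_div] at h
    have e1 : ∀ y : ℝ, ((P y) ^ r) ^ (1/r) = P y := fun y => by
      rw [← ENNReal.rpow_mul, mul_one_div_cancel hr0.ne', ENNReal.rpow_one]
    simp only [e1] at h
    refine h.trans ?_
    gcongr
    · calc (∫⁻ y in Ioo (0:ℝ) x, P y) ≤ ∫⁻ y in Ioi (0:ℝ), P y :=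
          lintegral_mono_set Ioo_subset_Ioi_self
        _ = E := hEP.symm
    · linarith
  -- Layer cake for the q-th moment
  have hMq : ∫⁻ ω, ENNReal.ofReal (X ω ^ q) ∂ℙ = M := by
    rw [hM_def]
    exact lintegral_congr fun ω => (ENNReal.ofReal_rpow_of_nonneg (hXpos ω) hq0.le).symm
  set J : ℝ≥0∞ := ∫⁻ t in Ioi (0:ℝ), P t * (ENNReal.ofReal t) ^ (1/n) with hJ_def
  have hJM : ENNReal.ofReal q * J = M := by
    have hlayer := lintegral_rpow_eq_lintegral_meas_lt_mul ℙ hXae hX.aemeasurable hq0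
    rw [hMq] at hlayer
    rw [hJ_def, hlayer]
    congr 1
    refine setLIntegral_congr_fun measurableSet_Ioi ?_
    intro t ht
    have hq1n : q - 1 = 1/n := by rw [hq_def]; ring
    rw [hq1n]; dsimp only; rw [ENNReal.ofReal_rpow_of_pos ht]
  have hq_ne : ENNReal.ofReal q ≠ 0 := (ENNReal.ofReal_pos.mpr hq0).ne'
  have hq_ne_top : ENNReal.ofReal q ≠ ⊤ := ENNReal.ofReal_ne_top
  have hJeq : J = (ENNReal.ofReal q)⁻¹ * M := by
    rw [← hJM, ← mul_assoc, ENNReal.inv_mul_cancel hq_ne hq_ne_top, one_mul]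
  -- the key bound
  have key :
      2 * (∫⁻ x in Ioi (0:ℝ), ∫⁻ y in Ioo (0:ℝ) x, ENNReal.ofReal (p x * p y ^ r))
        - (∫⁻ x in Ioi (0:ℝ), ENNReal.ofReal (p x)) ^ 2
      ≤ ENNReal.ofReal (2/q) * M ^ ((2/q) : ℝ) := by
    rcases eq_or_ne M ⊤ with hM | hM
    · rw [hM, ENNReal.top_rpow_of_pos (by positivity),
        ENNReal.mul_top (ENNReal.ofReal_pos.mpr (by positivity)).ne']
      exact le_top
    · have hEtop : E ≠ ⊤ :=
        ne_top_of_le_ne_top (ENNReal.rpow_ne_top_of_nonneg (by positivity) hM) hE_le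
      have hErtop : E ^ r ≠ ⊤ := ENNReal.rpow_ne_top_of_nonneg hr0.le hEtop
      have hI : (∫⁻ x in Ioi (0:ℝ), ∫⁻ y in Ioo (0:ℝ) x, ENNReal.ofReal (p x * p y ^ r))
          ≤ E ^ r * J := by
        rw [hJ_def, ← lintegral_const_mul' _ _ hErtop]
        apply lintegral_mono
        intro x
        dsimp only
        have hin : (∫⁻ y in Ioo (0:ℝ) x, ENNReal.ofReal (p x * p y ^ r))
            = P x * ∫⁻ y in Ioo (0:ℝ) x, (P y) ^ r := by
          rw [← lintegral_const_mul' _ _ (measure_ne_top ℙ _)]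
          refine lintegral_congr fun y => ?_
          rw [ENNReal.ofReal_mul (hpnn x), hPof x, ← hPof y,
            ENNReal.ofReal_rpow_of_nonneg (hpnn y) hr0.le]
        rw [hin]
        calc P x * ∫⁻ y in Ioo (0:ℝ) x, (P y) ^ r
            ≤ P x * (E ^ r * (ENNReal.ofReal x) ^ (1/n)) :=
              mul_le_mul_right (hinner x) _
          _ = E ^ r * (P x * (ENNReal.ofReal x) ^ (1/n)) := by ring
      calc 2 * (∫⁻ x in Ioi (0:ℝ), ∫⁻ y in Ioo (0:ℝ) x, ENNReal.ofReal (p x * p y ^ r))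
            - (∫⁻ x in Ioi (0:ℝ), ENNReal.ofReal (p x)) ^ 2
          ≤ 2 * (∫⁻ x in Ioi (0:ℝ), ∫⁻ y in Ioo (0:ℝ) x,
              ENNReal.ofReal (p x * p y ^ r)) := tsub_le_self
        _ ≤ 2 * (E ^ r * J) := by gcongr
        _ = 2 * (E ^ r * ((ENNReal.ofReal q)⁻¹ * M)) := by rw [hJeq]
        _ ≤ 2 * ((M ^ (1/q)) ^ r * ((ENNReal.ofReal q)⁻¹ * M)) := by gcongr
        _ = (2 * (ENNReal.ofReal q)⁻¹) * (M ^ ((1/q) * r) * M ^ (1:ℝ)) := by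
            rw [← ENNReal.rpow_mul, ENNReal.rpow_one]; ring
        _ = (2 * (ENNReal.ofReal q)⁻¹) * M ^ ((1/q) * r + 1) := by
            rw [ENNReal.rpow_add_of_nonneg _ _ (by positivity) zero_le_one]
        _ = ENNReal.ofReal (2/q) * M ^ ((2/q) : ℝ) := by
            congr 1
            · rw [ENNReal.ofReal_div_of_pos hq0, div_eq_mul_inv]
              norm_num
            · congr 1
              have : r + q = 2 := by rw [hr_def, hq_def]; ring
              field_simp
              linarith
    -- end key
  constructor
  · exact key
  · intro ε hε hMε hNε
    have h1nε : 1/n ≤ ε := by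
      rw [div_le_iff₀ hε] at hNε
      rw [div_le_iff₀ hn0]
      nlinarith
    have hq_le : q ≤ 1 + ε := by rw [hq_def]; linarith
    have hMfin : M ≠ ⊤ := by
      have hle : M ≤ 1 + ∫⁻ ω, (ENNReal.ofReal (X ω)) ^ ((1 + ε) : ℝ) ∂ℙ := by
        rw [hM_def]
        calc (∫⁻ ω, (ENNReal.ofReal (X ω)) ^ q ∂ℙ)
            ≤ ∫⁻ ω, (1 + (ENNReal.ofReal (X ω)) ^ ((1 + ε) : ℝ)) ∂ℙ := by
              apply lintegral_mono
              intro ω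
              rcases le_total (ENNReal.ofReal (X ω)) 1 with h1 | h1
              · exact le_trans (ENNReal.rpow_le_one h1 hq0.le) le_self_add
              · exact le_trans (ENNReal.rpow_le_rpow_of_exponent_le h1 hq_le) le_add_self
          _ = 1 + ∫⁻ ω, (ENNReal.ofReal (X ω)) ^ ((1 + ε) : ℝ) ∂ℙ := by
              rw [lintegral_add_left measurable_const, lintegral_const, measure_univ, mul_one]
      exact ne_top_of_le_ne_top (ENNReal.add_ne_top.mpr ⟨ENNReal.one_ne_top, hMε⟩) hle
    refine lt_of_le_of_lt key ?_
    exact ENNReal.mul_lt_top ENNReal.ofReal_lt_top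
      (ENNReal.rpow_lt_top_of_nonneg (by positivity) hMfin)
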